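/- Let I ⊆ ℝ be an interval, t₀ ∈ I, P ∈ C¹(I, ℝ) and Q ∈ C¹(I × ℝ, ℝ). Then the following are equivalent: (1) there exists a differentiable function r̂ : I → [0, ∞) with r̂(t₀) = 0, r̂(t) > 0 for all t ∈ I \ {t₀}, and r̂′(t) = P(t)·r̂(t)^(1/2) + Q(t, r̂(t))·r̂(t) for all t ∈ I; (2) there exists a differentiable function u : I → [0, ∞) with u(t₀) = 0, u(t) > 0 for all t ∈ I \ {t₀}, and u′(t) = (1/2)·P(t) + (1/2)·Q(t, u(t)²)·u(t) for all t ∈ I. Moreover, when such a function u exists it is unique, and hence r̂ = u² is the unique function satisfying (1). -/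

import Mathlib

/-- A function `r̂ : I → [0,∞)` with `r̂(t₀) = 0`, `r̂ > 0` on `I \ {t₀}`, satisfying the
radial null geodesic equation `r̂' = P(t)·r̂^(1/2) + Q(t, r̂)·r̂` on `I`. -/
def IsRNGSolutionHat (I : Set ℝ) (t₀ : ℝ) (P : ℝ → ℝ) (Q : ℝ → ℝ → ℝ) (r : ℝ → ℝ) : Prop :=
  r t₀ = 0 ∧ (∀ t ∈ I, 0 ≤ r t) ∧ (∀ t ∈ I, t ≠ t₀ → 0 < r t) ∧
  ∀ t ∈ I, HasDerivWithinAt r (P t * (r t) ^ ((1 : ℝ) / 2) + Q t (r t) * r t) I t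

/-- A function `u : I → [0,∞)` with `u(t₀) = 0`, `u > 0` on `I \ {t₀}`, satisfying the
transformed equation `u' = (1/2)·P(t) + (1/2)·Q(t, u²)·u` on `I`. -/
def IsRNGSolutionU (I : Set ℝ) (t₀ : ℝ) (P : ℝ → ℝ) (Q : ℝ → ℝ → ℝ) (u : ℝ → ℝ) : Prop :=
  u t₀ = 0 ∧ (∀ t ∈ I, 0 ≤ u t) ∧ (∀ t ∈ I, t ≠ t₀ → 0 < u t) ∧
  ∀ t ∈ I, HasDerivWithinAt u ((1 / 2) * P t + (1 / 2) * Q t ((u t) ^ 2) * u t) I t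

open Set Filter

section Aux

variable {I : Set ℝ} {t₀ : ℝ} {P : ℝ → ℝ} {Q : ℝ → ℝ → ℝ}

/-- Easy direction: if `u` solves the transformed equation, `u²` solves the original one. -/
lemma aux_U_to_Hat {u : ℝ → ℝ} (hu : IsRNGSolutionU I t₀ P Q u) :
    IsRNGSolutionHat I t₀ P Q (fun t => (u t) ^ 2) := by
  obtain ⟨h0, hnn, hpos, hder⟩ := hu
  refine ⟨by simp [h0], fun t ht => sq_nonneg _, fun t ht hne => pow_pos (hpos t ht hne) 2,
    fun t ht => ?_⟩
  have h := (hder t ht).pow 2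
  refine h.congr_deriv ?_
  have hsq : ((u t) ^ 2 : ℝ) ^ ((1 : ℝ) / 2) = u t := by
    rw [← Real.sqrt_eq_rpow, Real.sqrt_sq (hnn t ht)]
  rw [hsq]
  push_cast
  ring

/-- A uniform Lipschitz bound for the (t-truncated) RHS of the transformed equation. -/
lemma aux_lip (hIconn : I.OrdConnected)
    (hQ : ContDiffOn ℝ 1 (fun p : ℝ × ℝ => Q p.1 p.2) (I ×ˢ Set.univ))
    {a b : ℝ} (hab : a < b) (ha : a ∈ I) (hb : b ∈ I) (R : ℝ) :
    ∃ K : NNReal, ∀ s : ℝ,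
      LipschitzOnWith K
        (fun x : ℝ => if s ∈ Icc a b then (1/2) * P s + (1/2) * Q s (x ^ 2) * x else 0)
        (Icc (-R) R) := by
  set G : ℝ × ℝ → ℝ := fun p => (1/2) * Q p.1 (p.2 ^ 2) * p.2 with hGdef
  have hmaps : (I ×ˢ (univ : Set ℝ)) ⊆ (fun p : ℝ × ℝ => (p.1, p.2 ^ 2)) ⁻¹' (I ×ˢ univ) :=
    fun p hp => ⟨hp.1, trivial⟩
  have h1 : ContDiffOn ℝ 1 (fun p : ℝ × ℝ => Q p.1 (p.2 ^ 2)) (I ×ˢ (univ : Set ℝ)) :=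
    hQ.comp ((contDiff_fst.prodMk (contDiff_snd.pow 2)).contDiffOn) hmaps
  have hG : ContDiffOn ℝ 1 G (I ×ˢ (univ : Set ℝ)) :=
    (contDiffOn_const.mul h1).mul contDiff_snd.contDiffOn
  have hconvI : Convex ℝ I := convex_iff_ordConnected.mpr hIconn
  have hIoo : Ioo a b ⊆ I := Set.Ioo_subset_Icc_self.trans (hIconn.out ha hb)
  have hint : (interior I).Nonempty :=
    ⟨(a + b) / 2, interior_maximal hIoo isOpen_Ioo (by constructor <;> linarith)⟩
  have hUD : UniqueDiffOn ℝ (I ×ˢ (univ : Set ℝ)) :=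
    (uniqueDiffOn_convex hconvI hint).prod uniqueDiffOn_univ
  have hcf : ContinuousOn (fun p => fderivWithin ℝ G (I ×ˢ (univ : Set ℝ)) p)
      (I ×ˢ (univ : Set ℝ)) := hG.continuousOn_fderivWithin hUD le_rfl
  have hKsub : (Icc a b ×ˢ Icc (-R) R) ⊆ I ×ˢ (univ : Set ℝ) :=
    Set.prod_mono (hIconn.out ha hb) (subset_univ _)
  obtain ⟨C, hC⟩ :=
    (isCompact_Icc.prod isCompact_Icc).exists_bound_of_continuousOn (hcf.mono hKsub)
  refine ⟨Real.toNNReal C, fun s => ?_⟩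
  have hlipG : LipschitzOnWith (Real.toNNReal C) G (Icc a b ×ˢ Icc (-R) R) := by
    apply Convex.lipschitzOnWith_of_nnnorm_hasFDerivWithin_le
      (f' := fun p => fderivWithin ℝ G (I ×ˢ (univ : Set ℝ)) p)
      (fun x hx => ((hG.differentiableOn one_ne_zero x (hKsub hx)).hasFDerivWithinAt).mono hKsub)
      ?_ ((convex_Icc a b).prod (convex_Icc (-R) R))
    intro x hx
    rw [← NNReal.coe_le_coe, coe_nnnorm, Real.coe_toNNReal']
    exact (hC x hx).trans (le_max_left C 0)
  by_cases hs : s ∈ Icc a b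
  · simp only [if_pos hs]
    rw [lipschitzOnWith_iff_dist_le_mul] at hlipG ⊢
    intro x hx y hy
    have hd : dist ((s, x) : ℝ × ℝ) (s, y) = dist x y := by
      rw [Prod.dist_eq]
      simp [dist_self, dist_nonneg]
    have h := hlipG (s, x) ⟨hs, hx⟩ (s, y) ⟨hs, hy⟩
    rw [hd] at h
    calc dist ((1/2) * P s + (1/2) * Q s (x ^ 2) * x) ((1/2) * P s + (1/2) * Q s (y ^ 2) * y)
        = dist (G (s, x)) (G (s, y)) := by rw [dist_add_left]
      _ ≤ (Real.toNNReal C) * dist x y := h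
  · simp only [if_neg hs]
    exact ((LipschitzWith.const (0 : ℝ)).weaken zero_le).lipschitzOnWith

/-- Uniqueness of solutions of the transformed equation. -/
lemma aux_unique (hIconn : I.OrdConnected) (ht₀ : t₀ ∈ I)
    (hQ : ContDiffOn ℝ 1 (fun p : ℝ × ℝ => Q p.1 p.2) (I ×ˢ Set.univ)) :
    ∀ u v, IsRNGSolutionU I t₀ P Q u → IsRNGSolutionU I t₀ P Q v → Set.EqOn u v I := by
  intro u v hu hv t ht
  obtain ⟨hu0, hunn, hupos, hud⟩ := hu
  obtain ⟨hv0, hvnn, hvpos, hvd⟩ := hv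
  rcases eq_or_ne t t₀ with rfl | hne
  · rw [hu0, hv0]
  have hucont : ContinuousOn u I := fun s hs => (hud s hs).continuousWithinAt
  have hvcont : ContinuousOn v I := fun s hs => (hvd s hs).continuousWithinAt
  rcases hne.lt_or_gt with hlt | hlt
  · -- t < t₀ : backward uniqueness on Icc t t₀
    have hIcc : Icc t t₀ ⊆ I := hIconn.out ht ht₀
    obtain ⟨C1, hC1⟩ := isCompact_Icc.exists_bound_of_continuousOn (hucont.mono hIcc)
    obtain ⟨C2, hC2⟩ := isCompact_Icc.exists_bound_of_continuousOn (hvcont.mono hIcc)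
    set R := max C1 C2 with hR
    obtain ⟨K, hK⟩ := aux_lip (P := P) hIconn hQ hlt ht ht₀ R
    have hmemu : ∀ s ∈ Icc t t₀, u s ∈ Icc (-R) R := by
      intro s hs
      have := hC1 s hs
      rw [Real.norm_eq_abs, abs_le] at this
      have h1 := le_max_left C1 C2
      exact ⟨by linarith [this.1], by linarith [this.2]⟩
    have hmemv : ∀ s ∈ Icc t t₀, v s ∈ Icc (-R) R := by
      intro s hs
      have := hC2 s hs
      rw [Real.norm_eq_abs, abs_le] at this
      have h1 := le_max_right C1 C2
      exact ⟨by linarith [this.1], by linarith [this.2]⟩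
    have hder : ∀ w : ℝ → ℝ, (∀ s ∈ I, HasDerivWithinAt w
          ((1/2) * P s + (1/2) * Q s ((w s) ^ 2) * w s) I s) →
        ∀ s ∈ Ioc t t₀, HasDerivWithinAt w
          (if s ∈ Icc t t₀ then (1/2) * P s + (1/2) * Q s ((w s) ^ 2) * w s else 0)
          (Iic s) s := by
      intro w hw s hs
      have hsI : s ∈ I := hIcc (Ioc_subset_Icc_self hs)
      have h1 : HasDerivWithinAt w ((1/2) * P s + (1/2) * Q s ((w s) ^ 2) * w s) (Ioc t s) s :=
        (hw s hsI).mono (Set.Ioc_subset_Icc_self.trans (hIconn.out ht hsI))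
      have h2 := h1.mono_of_mem_nhdsWithin (Ioc_mem_nhdsLE_of_mem ⟨hs.1, le_rfl⟩)
      rw [if_pos (Ioc_subset_Icc_self hs)]
      exact h2
    have heq := ODE_solution_unique_of_mem_Icc_left
      (v := fun s x => if s ∈ Icc t t₀ then (1/2) * P s + (1/2) * Q s (x ^ 2) * x else 0)
      (s := fun _ => Icc (-R) R) (K := K) (fun s _ => hK s)
      (hucont.mono hIcc) (hder u hud) (fun s hs => hmemu s (Ioc_subset_Icc_self hs))
      (hvcont.mono hIcc) (hder v hvd) (fun s hs => hmemv s (Ioc_subset_Icc_self hs))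
      (hu0.trans hv0.symm)
    exact heq ⟨le_rfl, le_of_lt hlt⟩
  · -- t₀ < t : forward uniqueness on Icc t₀ t
    have hIcc : Icc t₀ t ⊆ I := hIconn.out ht₀ ht
    obtain ⟨C1, hC1⟩ := isCompact_Icc.exists_bound_of_continuousOn (hucont.mono hIcc)
    obtain ⟨C2, hC2⟩ := isCompact_Icc.exists_bound_of_continuousOn (hvcont.mono hIcc)
    set R := max C1 C2 with hR
    obtain ⟨K, hK⟩ := aux_lip (P := P) hIconn hQ hlt ht₀ ht R
    have hmemu : ∀ s ∈ Icc t₀ t, u s ∈ Icc (-R) R := by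
      intro s hs
      have := hC1 s hs
      rw [Real.norm_eq_abs, abs_le] at this
      have h1 := le_max_left C1 C2
      exact ⟨by linarith [this.1], by linarith [this.2]⟩
    have hmemv : ∀ s ∈ Icc t₀ t, v s ∈ Icc (-R) R := by
      intro s hs
      have := hC2 s hs
      rw [Real.norm_eq_abs, abs_le] at this
      have h1 := le_max_right C1 C2
      exact ⟨by linarith [this.1], by linarith [this.2]⟩
    have hder : ∀ w : ℝ → ℝ, (∀ s ∈ I, HasDerivWithinAt w
          ((1/2) * P s + (1/2) * Q s ((w s) ^ 2) * w s) I s) →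
        ∀ s ∈ Ico t₀ t, HasDerivWithinAt w
          (if s ∈ Icc t₀ t then (1/2) * P s + (1/2) * Q s ((w s) ^ 2) * w s else 0)
          (Ici s) s := by
      intro w hw s hs
      have hsI : s ∈ I := hIcc (Ico_subset_Icc_self hs)
      have h1 : HasDerivWithinAt w ((1/2) * P s + (1/2) * Q s ((w s) ^ 2) * w s) (Ico s t) s :=
        (hw s hsI).mono (Set.Ico_subset_Icc_self.trans (hIconn.out hsI ht))
      have h2 := h1.mono_of_mem_nhdsWithin (Ico_mem_nhdsGE_of_mem ⟨le_rfl, hs.2⟩)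
      rw [if_pos (Ico_subset_Icc_self hs)]
      exact h2
    have heq := ODE_solution_unique_of_mem_Icc_right
      (v := fun s x => if s ∈ Icc t₀ t then (1/2) * P s + (1/2) * Q s (x ^ 2) * x else 0)
      (s := fun _ => Icc (-R) R) (K := K) (fun s _ => hK s)
      (hucont.mono hIcc) (hder u hud) (fun s hs => hmemu s (Ico_subset_Icc_self hs))
      (hvcont.mono hIcc) (hder v hvd) (fun s hs => hmemv s (Ico_subset_Icc_self hs))
      (hu0.trans hv0.symm)
    exact heq ⟨le_of_lt hlt, le_rfl⟩

end Aux

section Hard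

variable {I : Set ℝ} {t₀ : ℝ} {P : ℝ → ℝ} {Q : ℝ → ℝ → ℝ}

/-- Hard direction: if `r` solves the original equation, `√r` solves the transformed one. -/
lemma aux_Hat_to_U (hIconn : I.OrdConnected) (ht₀ : t₀ ∈ I)
    (hP : ContDiffOn ℝ 1 P I)
    (hQ : ContDiffOn ℝ 1 (fun p : ℝ × ℝ => Q p.1 p.2) (I ×ˢ Set.univ))
    {r : ℝ → ℝ} (hr : IsRNGSolutionHat I t₀ P Q r) :
    IsRNGSolutionU I t₀ P Q (fun t => Real.sqrt (r t)) := by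
  obtain ⟨h0, hnn, hpos, hder⟩ := hr
  set u : ℝ → ℝ := fun t => Real.sqrt (r t) with hudef
  have hu0 : u t₀ = 0 := by simp [hudef, h0]
  have hrcont : ContinuousOn r I := fun s hs => (hder s hs).continuousWithinAt
  have hucont : ContinuousOn u I := Real.continuous_sqrt.comp_continuousOn hrcont
  set g : ℝ → ℝ := fun s => (1/2) * P s + (1/2) * Q s ((u s) ^ 2) * u s with hgdef
  -- derivative away from t₀
  have hgder : ∀ s ∈ I, s ≠ t₀ → HasDerivWithinAt u (g s) I s := by
    intro s hs hne
    have hrs : 0 < r s := hpos s hs hne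
    have h1 := (hder s hs).sqrt (ne_of_gt hrs)
    convert h1 using 1
    have h2 : ((u s) ^ 2 : ℝ) = r s := Real.sq_sqrt hrs.le
    have h3 : (r s) ^ ((1 : ℝ) / 2) = Real.sqrt (r s) := (Real.sqrt_eq_rpow _).symm
    have h4 : Real.sqrt (r s) ≠ 0 := by positivity
    rw [hgdef]
    simp only [h2, h3]
    show (1/2) * P s + (1/2) * Q s (r s) * Real.sqrt (r s)
        = (P s * Real.sqrt (r s) + Q s (r s) * r s) / (2 * Real.sqrt (r s))
    rw [eq_div_iff (by positivity)]
    have h5 : Real.sqrt (r s) * Real.sqrt (r s) = r s := Real.mul_self_sqrt hrs.le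
    linear_combination Q s (r s) * h5
  -- continuity of g at t₀ within I
  have hgcont : ContinuousWithinAt g I t₀ := by
    have hPc : ContinuousWithinAt P I t₀ := (hP.continuousOn t₀ ht₀)
    have huc : ContinuousWithinAt u I t₀ := hucont t₀ ht₀
    have hQc : ContinuousWithinAt (fun s => Q s ((u s) ^ 2)) I t₀ := by
      have hmap : ContinuousWithinAt (fun s => ((s, (u s) ^ 2) : ℝ × ℝ)) I t₀ :=
        (continuousWithinAt_id).prodMk (huc.pow 2)
      have := ContinuousWithinAt.comp (g := fun p : ℝ × ℝ => Q p.1 p.2)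
        (f := fun s => ((s, (u s) ^ 2) : ℝ × ℝ)) (t := I ×ˢ Set.univ)
        (hQ.continuousOn (t₀, (u t₀) ^ 2) ⟨ht₀, trivial⟩) hmap (fun s hs => ⟨hs, trivial⟩)
      exact this
    exact (continuousWithinAt_const.mul hPc).add
      ((continuousWithinAt_const.mul hQc).mul huc)
  -- derivative at t₀
  have hdert₀ : HasDerivWithinAt u (g t₀) I t₀ := by
    rw [hasDerivWithinAt_iff_tendsto_slope]
    rw [Metric.tendsto_nhdsWithin_nhds]
    intro ε hε
    rw [Metric.continuousWithinAt_iff] at hgcont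
    obtain ⟨δ, hδ, hδ'⟩ := hgcont ε hε
    refine ⟨δ, hδ, ?_⟩
    rintro x ⟨hxI, hxne⟩ hxd
    rw [Set.mem_singleton_iff] at hxne
    rcases (Ne.lt_or_gt hxne) with hxlt | hxlt
    · -- x < t₀
      have hIcc : Icc x t₀ ⊆ I := hIconn.out hxI ht₀
      have hIoo : Ioo x t₀ ⊆ I := Set.Ioo_subset_Icc_self.trans hIcc
      obtain ⟨c, hc, hceq⟩ := exists_hasDerivAt_eq_slope u g hxlt (hucont.mono hIcc)
        (fun y hy => (hgder y (hIoo hy) (ne_of_lt hy.2)).hasDerivAt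
          (Filter.mem_of_superset (Ioo_mem_nhds hy.1 hy.2) hIoo))
      have hslope : slope u t₀ x = g c := by
        rw [slope_def_field, hceq]
        rw [div_eq_div_iff (by linarith [hxlt]) (by linarith [hxlt])]
        ring
      rw [hslope]
      apply hδ' (hIoo hc)
      rw [Real.dist_eq] at hxd ⊢
      rw [abs_of_neg (by linarith [hxlt])] at hxd
      rw [abs_of_neg (by linarith [hc.1, hc.2])]
      linarith [hc.1]
    · -- t₀ < x
      have hIcc : Icc t₀ x ⊆ I := hIconn.out ht₀ hxI
      have hIoo : Ioo t₀ x ⊆ I := Set.Ioo_subset_Icc_self.trans hIcc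
      obtain ⟨c, hc, hceq⟩ := exists_hasDerivAt_eq_slope u g hxlt (hucont.mono hIcc)
        (fun y hy => (hgder y (hIoo hy) (ne_of_gt hy.1)).hasDerivAt
          (Filter.mem_of_superset (Ioo_mem_nhds hy.1 hy.2) hIoo))
      have hslope : slope u t₀ x = g c := by
        rw [slope_def_field, hceq]
      rw [hslope]
      apply hδ' (hIoo hc)
      rw [Real.dist_eq] at hxd ⊢
      rw [abs_of_pos (by linarith [hxlt])] at hxd
      rw [abs_of_pos (by linarith [hc.1, hc.2])]
      linarith [hc.2]
  refine ⟨hu0, fun t ht => Real.sqrt_nonneg _, fun t ht hne => Real.sqrt_pos.mpr (hpos t ht hne),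
    fun t ht => ?_⟩
  rcases eq_or_ne t t₀ with rfl | hne
  · exact hdert₀
  · exact hgder t ht hne

end Hard

/-- Equivalence of the radial null geodesic equation in the variable
`r̂ = r - r₁(t)` with the transformed equation for `u = r̂^(1/2)`, together with
uniqueness of the solution `u` (and hence of `r̂ = u²`). -/
theorem rng_boundary_substitution (I : Set ℝ) (hIconn : I.OrdConnected)
    (t₀ : ℝ) (ht₀ : t₀ ∈ I)
    (P : ℝ → ℝ) (hP : ContDiffOn ℝ 1 P I)
    (Q : ℝ → ℝ → ℝ)
    (hQ : ContDiffOn ℝ 1 (fun p : ℝ × ℝ => Q p.1 p.2) (I ×ˢ Set.univ)) :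
    ((∃ r, IsRNGSolutionHat I t₀ P Q r) ↔ (∃ u, IsRNGSolutionU I t₀ P Q u)) ∧
    (∀ u v, IsRNGSolutionU I t₀ P Q u → IsRNGSolutionU I t₀ P Q v → Set.EqOn u v I) ∧
    (∀ u, IsRNGSolutionU I t₀ P Q u →
      IsRNGSolutionHat I t₀ P Q (fun t => (u t) ^ 2) ∧
      ∀ r, IsRNGSolutionHat I t₀ P Q r → Set.EqOn r (fun t => (u t) ^ 2) I) := by
  refine ⟨⟨fun ⟨r, hr⟩ => ⟨_, aux_Hat_to_U hIconn ht₀ hP hQ hr⟩,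
      fun ⟨u, hu⟩ => ⟨_, aux_U_to_Hat hu⟩⟩,
    aux_unique hIconn ht₀ hQ,
    fun u hu => ⟨aux_U_to_Hat hu, fun r hr t ht => ?_⟩⟩
  have h1 : IsRNGSolutionU I t₀ P Q (fun t => Real.sqrt (r t)) :=
    aux_Hat_to_U hIconn ht₀ hP hQ hr
  have h2 := aux_unique hIconn ht₀ hQ _ u h1 hu ht
  have h3 : r t = (Real.sqrt (r t)) ^ 2 := (Real.sq_sqrt (hr.2.1 t ht)).symm
  simp only at h2
  show r t = (u t) ^ 2
  rw [h3, h2]
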